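/- Let α, β be non-zero complex numbers and Γ = ℤα + ℤβ. For any solution (p,q) (monic non-zero polynomials with p(u)q(u) = p(u+β)q(u+α)) and any coset c ∈ ℂ/Γ, the pair (p_c, q_c), where p_c is the monic product of factors (u-w) over all roots w of p lying in c (with multiplicity) and similarly for q_c, is again a solution: p_c(u)q_c(u) = p_c(u+β)q_c(u+α). -/

import Mathlib

open Polynomial

open Classical in
noncomputable def cosetPart (α β : ℂ) (c : ℂ ⧸ AddSubgroup.closure ({α, β} : Set ℂ))
    (p : Polynomial ℂ) : Polynomial ℂ :=
  ((p.roots.filter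
      (fun z => (QuotientAddGroup.mk z : ℂ ⧸ AddSubgroup.closure ({α, β} : Set ℂ)) = c)).map
    (fun z => X - C z)).prod

open Classical in
lemma cosetPart_mul (α β : ℂ) (c : ℂ ⧸ AddSubgroup.closure ({α, β} : Set ℂ))
    (p q : Polynomial ℂ) (hp0 : p ≠ 0) (hq0 : q ≠ 0) :
    cosetPart α β c (p * q) = cosetPart α β c p * cosetPart α β c q := by
  unfold cosetPart
  rw [roots_mul (mul_ne_zero hp0 hq0), Multiset.filter_add, Multiset.map_add,
    Multiset.prod_add]

open Classical in
lemma cosetPart_comp (α β : ℂ) (c : ℂ ⧸ AddSubgroup.closure ({α, β} : Set ℂ))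
    (p : Polynomial ℂ) (hp : p.Monic) (γ : ℂ) (hγ : γ ∈ AddSubgroup.closure ({α, β} : Set ℂ)) :
    cosetPart α β c (p.comp (X + C γ)) = (cosetPart α β c p).comp (X + C γ) := by
  have hsplit : p = (p.roots.map fun a => X - C a).prod :=
    (IsAlgClosed.splits p).eq_prod_roots_of_monic hp
  have key : ∀ (s : Multiset ℂ),
      ((s.map fun a => X - C a).prod).comp (X + C γ) =
        ((s.map fun a => a - γ).map fun a => X - C a).prod := by
    intro s
    rw [multiset_prod_comp, Multiset.map_map, Multiset.map_map]
    congr 1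
    apply Multiset.map_congr rfl
    intro a _
    simp [sub_comp, X_comp, C_comp, C_sub]
    ring
  have hcond : ∀ z : ℂ,
      ((QuotientAddGroup.mk (z - γ) : ℂ ⧸ AddSubgroup.closure ({α, β} : Set ℂ)) = c)
        = ((QuotientAddGroup.mk z : ℂ ⧸ AddSubgroup.closure ({α, β} : Set ℂ)) = c) := by
    intro z
    have : (QuotientAddGroup.mk (z - γ) : ℂ ⧸ AddSubgroup.closure ({α, β} : Set ℂ))
        = QuotientAddGroup.mk z := by
      rw [QuotientAddGroup.eq_iff_sub_mem]
      simpa using (AddSubgroup.closure ({α, β} : Set ℂ)).neg_mem hγ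
    rw [this]
  conv_lhs => rw [cosetPart, show p.comp (X + C γ) = ((p.roots.map fun a => a - γ).map
    fun a => X - C a).prod by rw [← key]; exact congrArg (·.comp (X + C γ)) hsplit]
  rw [roots_multiset_prod_X_sub_C]
  rw [Multiset.filter_map]
  have : (Multiset.filter
      (fun z => (QuotientAddGroup.mk z : ℂ ⧸ AddSubgroup.closure ({α, β} : Set ℂ)) = c)
      p.roots).map (fun a => a - γ)
      = (Multiset.filter ((fun z => (QuotientAddGroup.mk z : ℂ ⧸ AddSubgroup.closure
        ({α, β} : Set ℂ)) = c) ∘ (fun a => a - γ)) p.roots).map (fun a => a - γ) := by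
    congr 1
    apply Multiset.filter_congr
    intro z _
    simp only [Function.comp_apply]
    rw [hcond z]
  rw [← this, cosetPart, key]

theorem stmt18 (α β : ℂ) (hα : α ≠ 0) (hβ : β ≠ 0)
    (p q : Polynomial ℂ) (hp0 : p ≠ 0) (hq0 : q ≠ 0)
    (hp : p.Monic) (hq : q.Monic)
    (heq : p * q = p.comp (X + C β) * q.comp (X + C α))
    (c : ℂ ⧸ AddSubgroup.closure ({α, β} : Set ℂ)) :
    cosetPart α β c p * cosetPart α β c q =
      (cosetPart α β c p).comp (X + C β) * (cosetPart α β c q).comp (X + C α) := by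
  have hα' : α ∈ AddSubgroup.closure ({α, β} : Set ℂ) :=
    AddSubgroup.subset_closure (by simp)
  have hβ' : β ∈ AddSubgroup.closure ({α, β} : Set ℂ) :=
    AddSubgroup.subset_closure (by simp)
  have hpc : p.comp (X + C β) ≠ 0 := fun h => by
    have := hp.comp_X_add_C β
    exact this.ne_zero h
  have hqc : q.comp (X + C α) ≠ 0 := fun h => by
    have := hq.comp_X_add_C α
    exact this.ne_zero h
  calc cosetPart α β c p * cosetPart α β c q
      = cosetPart α β c (p * q) := (cosetPart_mul α β c p q hp0 hq0).symm
    _ = cosetPart α β c (p.comp (X + C β) * q.comp (X + C α)) := by rw [heq]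
    _ = cosetPart α β c (p.comp (X + C β)) * cosetPart α β c (q.comp (X + C α)) :=
        cosetPart_mul α β c _ _ hpc hqc
    _ = (cosetPart α β c p).comp (X + C β) * (cosetPart α β c q).comp (X + C α) := by
        rw [cosetPart_comp α β c p hp β hβ', cosetPart_comp α β c q hq α hα']
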